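/- Let h ∈ ℂ[X,Y] be non-zero, let a(X) be a non-zero Laurent–Puiseux series in 1/X of degree θ, and set m = max{α + θβ : (α,β) ∈ supp h}. Then deg h(X, a(X)) ≤ m, and the inequality is strict if and only if there exists a segment S of the right Newton polygon of h such that in(h,S)(X, a⁺(X)) = 0, where a⁺(X) is the leading term of a(X). -/

import Mathlib

open scoped Classical

noncomputable section

/-- A (candidate) segment in the plane, given by its two lattice endpoints. -/
structure Seg where
  P : ℕ × ℕ
  Q : ℕ × ℕ

/-- the support of a polynomial in two variables, as a finite set of pairs `(α,β)`. -/
def supp (h : MvPolynomial (Fin 2) ℂ) : Finset (ℕ × ℕ) :=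
  h.support.image fun d => (d 0, d 1)

/-- the coefficient `h_{αβ}` of `X^α Y^β` in `h`. -/
def coeff2 (h : MvPolynomial (Fin 2) ℂ) (p : ℕ × ℕ) : ℂ :=
  MvPolynomial.coeff (Finsupp.single 0 p.1 + Finsupp.single 1 p.2) h

/-- the linear functional whose level lines are parallel to `S`, normalized so that
(for a right-polygon segment, `S.P.2 < S.Q.2`) its gradient points to the right. -/
def lfun (S : Seg) (v : ℕ × ℕ) : ℤ :=
  ((S.Q.2 : ℤ) - S.P.2) * v.1 - ((S.Q.1 : ℤ) - S.P.1) * v.2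

/-- the linear functional whose level lines are parallel to `S`, normalized so that
(for a top-polygon segment, `S.P.1 < S.Q.1`) its gradient points upwards. -/
def gfun (S : Seg) (v : ℕ × ℕ) : ℤ :=
  ((S.Q.1 : ℤ) - S.P.1) * v.2 - ((S.Q.2 : ℤ) - S.P.2) * v.1

/-- `v` lies on the segment with endpoints `S.P` and `S.Q`
(collinear and inside the bounding box). -/
def OnSeg (S : Seg) (v : ℕ × ℕ) : Prop :=
  lfun S v = lfun S S.P ∧
  min S.P.1 S.Q.1 ≤ v.1 ∧ v.1 ≤ max S.P.1 S.Q.1 ∧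
  min S.P.2 S.Q.2 ≤ v.2 ∧ v.2 ≤ max S.P.2 S.Q.2

/-- `S` is a segment (one-dimensional boundary face) of the right Newton polygon of `h`:
its endpoints (ordered by increasing ordinate) are in the support, the whole support lies
weakly to the left of the line through `S` (the supporting line has outward normal with
positive first coordinate), and `S` is a maximal face: every support point on this line has
ordinate between those of the endpoints. Such segments are exactly the boundary faces on
the right of the Newton diagram joining the lines `β = ord_Y h` and `β = deg_Y h`. -/
def RightSeg (h : MvPolynomial (Fin 2) ℂ) (S : Seg) : Prop :=
  S.P ∈ supp h ∧ S.Q ∈ supp h ∧ S.P.2 < S.Q.2 ∧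
  (∀ v ∈ supp h, lfun S v ≤ lfun S S.P) ∧
  (∀ v ∈ supp h, lfun S v = lfun S S.P → S.P.2 ≤ v.2 ∧ v.2 ≤ S.Q.2)

/-- `S` is a segment of the top Newton polygon of `h` (endpoints ordered by increasing
abscissa; the supporting line has outward normal with positive second coordinate). -/
def TopSeg (h : MvPolynomial (Fin 2) ℂ) (S : Seg) : Prop :=
  S.P ∈ supp h ∧ S.Q ∈ supp h ∧ S.P.1 < S.Q.1 ∧
  (∀ v ∈ supp h, gfun S v ≤ gfun S S.P) ∧
  (∀ v ∈ supp h, gfun S v = gfun S S.P → S.P.1 ≤ v.1 ∧ v.1 ≤ S.Q.1)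

/-- `σ(S)` for a right-polygon segment (endpoints ordered by increasing ordinate):
`0` if `S` is vertical, otherwise minus the sign of the slope of `S`. -/
def sigmaR (S : Seg) : ℤ :=
  if S.P.1 = S.Q.1 then 0 else if S.P.1 < S.Q.1 then -1 else 1

/-- `σ(S)` for a top-polygon segment (endpoints ordered by increasing abscissa). -/
def sigmaT (S : Seg) : ℤ :=
  if S.P.2 = S.Q.2 then 0 else if S.P.2 < S.Q.2 then -1 else 1

/-- `|S₁|`, the length of the projection of `S` on the horizontal axis. -/
def len1 (S : Seg) : ℚ := |(S.Q.1 : ℚ) - S.P.1|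

/-- `|S₂|`, the length of the projection of `S` on the vertical axis. -/
def len2 (S : Seg) : ℚ := |(S.Q.2 : ℚ) - S.P.2|

/-- the declivity `(|S₁|/|S₂|)·σ(S)` of a right-polygon segment. -/
def decl (S : Seg) : ℚ := len1 S / len2 S * (sigmaR S : ℚ)

/-- the declivity `(|S₂|/|S₁|)·σ(S)` of a top-polygon segment. -/
def tdecl (S : Seg) : ℚ := len2 S / len1 S * (sigmaT S : ℚ)

/-- `α(S)`: the abscissa of the intersection of the line through `S` with the
horizontal axis. -/
def alphaS (S : Seg) : ℚ := (S.P.1 : ℚ) + (S.P.2 : ℚ) * decl S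

/-- `β(S)`: the ordinate of the intersection of the line through `S` with the
vertical axis. -/
def betaS (S : Seg) : ℚ := (S.P.2 : ℚ) + (S.P.1 : ℚ) * tdecl S

/-- a right-polygon segment is exceptional if it joins the horizontal axis with a
point of the form `(p, 1)`. -/
def RExcep (S : Seg) : Prop := S.P.2 = 0 ∧ S.Q.2 = 1

/-- a top-polygon segment is exceptional if it joins the vertical axis with a
point of the form `(1, q)`. -/
def TExcep (S : Seg) : Prop := S.P.1 = 0 ∧ S.Q.1 = 1

/-- `in(h,S)`: the sum of the monomials of `h` supported on the segment `S`. -/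
def inPoly (h : MvPolynomial (Fin 2) ℂ) (S : Seg) : MvPolynomial (Fin 2) ℂ :=
  ∑ p ∈ (supp h).filter (OnSeg S),
    MvPolynomial.monomial (Finsupp.single 0 p.1 + Finsupp.single 1 p.2) (coeff2 h p)

/-! Laurent–Puiseux series in `1/X` are modelled as Hahn series over `ℚᵒᵈ`:
formal series `∑ a_θ X^θ` with complex coefficients whose rational exponents form a
set that is well-ordered downwards (in particular bounded above); this field contains
`ℂ((1/X))* = ⋃_k ℂ((X^(−1/k)))` and is algebraically closed. -/
abbrev K : Type := HahnSeries ℚᵒᵈ ℂ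

/-- the degree of a Laurent–Puiseux series: its largest exponent. -/
def degLP (a : K) : ℚ := OrderDual.ofDual a.order

/-- `a⁺`, the leading term of a Laurent–Puiseux series. -/
def lead (a : K) : K := HahnSeries.single a.order a.leadingCoeff

/-- `X^θ` as a Laurent–Puiseux series. -/
def XpowQ (θ : ℚ) : K := HahnSeries.single (OrderDual.toDual θ) 1

/-- the substitution `h(X, a(X))` of a Laurent–Puiseux series for `Y` in `h`. -/
def substY (h : MvPolynomial (Fin 2) ℂ) (a : K) : K :=
  ∑ p ∈ supp h,
    (HahnSeries.single (OrderDual.toDual (p.1 : ℚ)) (coeff2 h p) : K) * a ^ p.2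

/-- the substitution `in(h,S)(X, a(X))` of a Laurent–Puiseux series for `Y` in `in(h,S)`. -/
def inSub (h : MvPolynomial (Fin 2) ℂ) (S : Seg) (a : K) : K :=
  ∑ p ∈ (supp h).filter (OnSeg S),
    (HahnSeries.single (OrderDual.toDual (p.1 : ℚ)) (coeff2 h p) : K) * a ^ p.2

-- auxiliary lemmas, to be inserted above stmt12
open HahnSeries OrderDual in
/-- exponent functional -/
def eps (θ : ℚ) (p : ℕ × ℕ) : ℚ := (p.1 : ℚ) + θ * (p.2 : ℚ)

/-- coefficient extraction as an additive hom -/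
def coeffHom (g : ℚᵒᵈ) : K →+ ℂ where
  toFun x := x.coeff g
  map_zero' := rfl
  map_add' _ _ := rfl

lemma sum_coeff {ι : Type*} (s : Finset ι) (f : ι → K) (g : ℚᵒᵈ) :
    (∑ i ∈ s, f i).coeff g = ∑ i ∈ s, (f i).coeff g :=
  map_sum (coeffHom g) f s

lemma mem_supp_iff (h : MvPolynomial (Fin 2) ℂ) (p : ℕ × ℕ) :
    p ∈ supp h ↔ coeff2 h p ≠ 0 := by
  constructor
  · rintro hp
    obtain ⟨d, hd, rfl⟩ := Finset.mem_image.mp hp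
    have hde : d = Finsupp.single 0 (d 0) + Finsupp.single 1 (d 1) := by
      ext i; fin_cases i <;> simp
    rw [coeff2]
    simpa [← hde] using hd
  · intro hc
    refine Finset.mem_image.mpr ⟨Finsupp.single 0 p.1 + Finsupp.single 1 p.2, ?_, ?_⟩
    · exact MvPolynomial.mem_support_iff.mpr hc
    · simp

lemma lc_pow (x : K) (hx : x ≠ 0) (n : ℕ) :
    (x ^ n).leadingCoeff = x.leadingCoeff ^ n := by
  induction n with
  | zero => simpa using HahnSeries.leadingCoeff_one
  | succ n ih =>
    have hxn : x ^ n ≠ 0 := pow_ne_zero _ hx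
    rw [pow_succ, HahnSeries.leadingCoeff_eq,
      HahnSeries.order_mul hxn hx, HahnSeries.coeff_mul_order_add_order, ih, pow_succ]

lemma hlf_lemma (S : Seg) (θ : ℚ) (hA : eps θ S.Q = eps θ S.P) (v : ℕ × ℕ) :
    ((lfun S v : ℤ) : ℚ) = ((S.Q.2 : ℚ) - S.P.2) * eps θ v := by
  unfold lfun eps at *
  push_cast
  linear_combination (-(v.2 : ℚ)) * hA
lemma filter_eq (h : MvPolynomial (Fin 2) ℂ) (θ m : ℚ) (S : Seg) (hRS : RightSeg h S)
    (hA : eps θ S.Q = eps θ S.P) (hPm : eps θ S.P = m) :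
    (supp h).filter (OnSeg S) = (supp h).filter (fun p => eps θ p = m) := by
  obtain ⟨hP, hQ, hlt, hle, hmaxl⟩ := hRS
  have hD : (0 : ℚ) < (S.Q.2 : ℚ) - S.P.2 := by
    have : (S.P.2 : ℚ) < S.Q.2 := Nat.cast_lt.mpr hlt
    linarith
  have hQm : eps θ S.Q = m := hA.trans hPm
  ext p
  simp only [Finset.mem_filter, and_congr_right_iff]
  intro hp
  constructor
  · rintro ⟨hl, -⟩
    have hl' : ((lfun S p : ℤ) : ℚ) = ((lfun S S.P : ℤ) : ℚ) := by exact_mod_cast hl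
    rw [hlf_lemma S θ hA, hlf_lemma S θ hA] at hl'
    have := mul_left_cancel₀ (ne_of_gt hD) hl'
    rw [this, hPm]
  · intro hpm
    have hl : lfun S p = lfun S S.P := by
      have : ((lfun S p : ℤ) : ℚ) = ((lfun S S.P : ℤ) : ℚ) := by
        rw [hlf_lemma S θ hA, hlf_lemma S θ hA, hpm, hPm]
      exact_mod_cast this
    obtain ⟨h1, h2⟩ := hmaxl p hp hl
    have h1' : (S.P.2 : ℚ) ≤ p.2 := Nat.cast_le.mpr h1
    have h2' : (p.2 : ℚ) ≤ S.Q.2 := Nat.cast_le.mpr h2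
    unfold eps at hpm hPm hQm
    have hfst : min S.P.1 S.Q.1 ≤ p.1 ∧ p.1 ≤ max S.P.1 S.Q.1 := by
      rcases le_total 0 θ with hθ0 | hθ0
      · have a1 : (S.Q.1 : ℚ) ≤ p.1 := by nlinarith
        have a2 : (p.1 : ℚ) ≤ S.P.1 := by nlinarith
        have b1 : S.Q.1 ≤ p.1 := Nat.cast_le.mp a1
        have b2 : p.1 ≤ S.P.1 := Nat.cast_le.mp a2
        omega
      · have a1 : (S.P.1 : ℚ) ≤ p.1 := by nlinarith
        have a2 : (p.1 : ℚ) ≤ S.Q.1 := by nlinarith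
        have b1 : S.P.1 ≤ p.1 := Nat.cast_le.mp a1
        have b2 : p.1 ≤ S.Q.1 := Nat.cast_le.mp a2
        omega
    exact ⟨hl, by omega, hfst.2, by omega, by omega⟩

open OrderDual in
lemma inSub_eq (h : MvPolynomial (Fin 2) ℂ) (a : K) (θ m : ℚ)
    (ho : a.order = toDual θ) (S : Seg)
    (hfe : (supp h).filter (OnSeg S) = (supp h).filter (fun p => eps θ p = m)) :
    inSub h S (lead a) = HahnSeries.single (toDual m)
      (∑ p ∈ (supp h).filter (fun p => eps θ p = m), coeff2 h p * a.leadingCoeff ^ p.2) := by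
  unfold inSub lead
  rw [hfe, ho]
  have key : ∀ p ∈ (supp h).filter (fun p => eps θ p = m),
      (HahnSeries.single (toDual (p.1 : ℚ)) (coeff2 h p) : K) *
        (HahnSeries.single (toDual θ) a.leadingCoeff : K) ^ p.2 =
      HahnSeries.single (toDual m) (coeff2 h p * a.leadingCoeff ^ p.2) := by
    intro p hp
    have hpm : eps θ p = m := (Finset.mem_filter.mp hp).2
    rw [HahnSeries.single_pow, HahnSeries.single_mul_single]
    have hexp : toDual (p.1 : ℚ) + p.2 • toDual θ = toDual m := by
      show toDual ((p.1 : ℚ) + p.2 • θ) = toDual m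
      congr 1
      rw [nsmul_eq_mul, ← hpm, eps]
      ring
    rw [hexp]
  rw [Finset.sum_congr rfl key]
  exact (map_sum (HahnSeries.single.addMonoidHom (toDual m)) _ _).symm
/-- Estimate (14) and Proposition 6.2: for `h ≠ 0`, a non-zero Laurent–Puiseux series
`a(X)` of degree `θ`, and `m = max{α + θβ : (α,β) ∈ supp h}`:
the substitution `h(X,a(X))` has no exponent above `m`, and its coefficient at `m`
vanishes (i.e. the substitution is non-generic, `deg h(X,a(X)) < m`) iff there is a
segment `S` of the right Newton polygon of `h` with `in(h,S)(X, a⁺(X)) = 0`. -/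
theorem stmt12 (h : MvPolynomial (Fin 2) ℂ) (h0 : h ≠ 0) (a : K) (ha : a ≠ 0)
    (θ m : ℚ) (hθ : θ = degLP a)
    (hub : ∀ p ∈ supp h, (p.1 : ℚ) + θ * (p.2 : ℚ) ≤ m)
    (hmax : ∃ p ∈ supp h, (p.1 : ℚ) + θ * (p.2 : ℚ) = m) :
    (∀ q : ℚ, m < q → (substY h a).coeff (OrderDual.toDual q) = 0) ∧
    ((substY h a).coeff (OrderDual.toDual m) = 0 ↔
      ∃ S : Seg, RightSeg h S ∧ inSub h S (lead a) = 0) := by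
  classical
  have ho : a.order = OrderDual.toDual θ := by rw [hθ]; rfl
  have hc : a.leadingCoeff ≠ 0 := HahnSeries.leadingCoeff_ne_zero.mpr ha
  have hub' : ∀ p ∈ supp h, eps θ p ≤ m := hub
  have hord : ∀ p : ℕ × ℕ, coeff2 h p ≠ 0 →
      ((HahnSeries.single (OrderDual.toDual (p.1 : ℚ)) (coeff2 h p) : K) * a ^ p.2).order
        = OrderDual.toDual (eps θ p) := by
    intro p hp
    rw [HahnSeries.order_mul (HahnSeries.single_ne_zero hp) (pow_ne_zero _ ha),
      HahnSeries.order_single hp, HahnSeries.order_pow, ho]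
    show OrderDual.toDual ((p.1 : ℚ) + p.2 • θ) = _
    congr 1
    rw [nsmul_eq_mul, eps]; ring
  have hlt : ∀ p : ℕ × ℕ, coeff2 h p ≠ 0 → ∀ q : ℚ, eps θ p < q →
      ((HahnSeries.single (OrderDual.toDual (p.1 : ℚ)) (coeff2 h p) : K) * a ^ p.2).coeff
        (OrderDual.toDual q) = 0 := by
    intro p hp q hq
    apply HahnSeries.coeff_eq_zero_of_lt_order
    rw [hord p hp]
    exact OrderDual.toDual_lt_toDual.mpr hq
  have heqc : ∀ p : ℕ × ℕ, coeff2 h p ≠ 0 →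
      ((HahnSeries.single (OrderDual.toDual (p.1 : ℚ)) (coeff2 h p) : K) * a ^ p.2).coeff
        (OrderDual.toDual (eps θ p)) = coeff2 h p * a.leadingCoeff ^ p.2 := by
    intro p hp
    have h1 := HahnSeries.coeff_mul_order_add_order
      (HahnSeries.single (OrderDual.toDual (p.1 : ℚ)) (coeff2 h p) : K) (a ^ p.2)
    rw [HahnSeries.order_single hp, HahnSeries.order_pow, ho,
      HahnSeries.leadingCoeff_of_single, lc_pow a ha] at h1
    have hexp : OrderDual.toDual (p.1 : ℚ) + p.2 • OrderDual.toDual θ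
        = OrderDual.toDual (eps θ p) := by
      show OrderDual.toDual ((p.1 : ℚ) + p.2 • θ) = _
      congr 1
      rw [nsmul_eq_mul, eps]; ring
    rw [hexp] at h1
    exact h1
  have hsub : ∀ q : ℚ, (substY h a).coeff (OrderDual.toDual q)
      = ∑ p ∈ supp h,
        ((HahnSeries.single (OrderDual.toDual (p.1 : ℚ)) (coeff2 h p) : K) * a ^ p.2).coeff
          (OrderDual.toDual q) := fun q => sum_coeff _ _ _
  have part1 : ∀ q : ℚ, m < q → (substY h a).coeff (OrderDual.toDual q) = 0 := by
    intro q hq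
    rw [hsub]
    exact Finset.sum_eq_zero fun p hp =>
      hlt p ((mem_supp_iff h p).mp hp) q (lt_of_le_of_lt (hub' p hp) hq)
  refine ⟨part1, ?_⟩
  have hFm : (substY h a).coeff (OrderDual.toDual m)
      = ∑ p ∈ (supp h).filter (fun p => eps θ p = m), coeff2 h p * a.leadingCoeff ^ p.2 := by
    rw [hsub, ← Finset.sum_filter_add_sum_filter_not (supp h) (fun p => eps θ p = m)]
    have hz2 : ∑ p ∈ (supp h).filter (fun p => ¬ eps θ p = m),
        ((HahnSeries.single (OrderDual.toDual (p.1 : ℚ)) (coeff2 h p) : K) * a ^ p.2).coeff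
          (OrderDual.toDual m) = 0 := by
      refine Finset.sum_eq_zero fun p hp => ?_
      obtain ⟨hp1, hp2⟩ := Finset.mem_filter.mp hp
      exact hlt p ((mem_supp_iff h p).mp hp1) m (lt_of_le_of_ne (hub' p hp1) hp2)
    rw [hz2, add_zero]
    refine Finset.sum_congr rfl fun p hp => ?_
    obtain ⟨hp1, hp2⟩ := Finset.mem_filter.mp hp
    rw [← hp2]
    exact heqc p ((mem_supp_iff h p).mp hp1)
  rw [hFm]
  constructor
  · -- forward: coefficient vanishes → exceptional segment exists
    intro hF0
    obtain ⟨p0, hp0s, hp0m⟩ := hmax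
    have hp0E : p0 ∈ (supp h).filter (fun p => eps θ p = m) :=
      Finset.mem_filter.mpr ⟨hp0s, hp0m⟩
    have hinj : ∀ p ∈ (supp h).filter (fun p => eps θ p = m),
        ∀ p' ∈ (supp h).filter (fun p => eps θ p = m), p.2 = p'.2 → p = p' := by
      intro p hp p' hp' h2
      have hpm := (Finset.mem_filter.mp hp).2
      have hpm' := (Finset.mem_filter.mp hp').2
      have h1 : (p.1 : ℚ) = p'.1 := by
        unfold eps at hpm hpm'
        rw [h2] at hpm
        linarith
      exact Prod.ext (Nat.cast_injective h1) h2
    have hnotsingle : ∃ p1 ∈ (supp h).filter (fun p => eps θ p = m), p1 ≠ p0 := by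
      by_contra hcon
      push_neg at hcon
      rw [Finset.eq_singleton_iff_unique_mem.mpr ⟨hp0E, hcon⟩, Finset.sum_singleton] at hF0
      exact (mul_ne_zero ((mem_supp_iff h p0).mp hp0s) (pow_ne_zero _ hc)) hF0
    obtain ⟨p1, hp1E, hp1ne⟩ := hnotsingle
    have hBne : ((supp h).filter (fun p => eps θ p = m)).image Prod.snd |>.Nonempty :=
      ⟨p0.2, Finset.mem_image_of_mem _ hp0E⟩
    obtain ⟨P, hPE, hP2⟩ := Finset.mem_image.mp (Finset.min'_mem _ hBne)
    obtain ⟨Q, hQE, hQ2⟩ := Finset.mem_image.mp (Finset.max'_mem _ hBne)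
    have hmin : ∀ p ∈ (supp h).filter (fun p => eps θ p = m), P.2 ≤ p.2 := by
      intro p hp
      rw [hP2]
      exact Finset.min'_le _ p.2 (Finset.mem_image_of_mem _ hp)
    have hmax' : ∀ p ∈ (supp h).filter (fun p => eps θ p = m), p.2 ≤ Q.2 := by
      intro p hp
      rw [hQ2]
      exact Finset.le_max' _ p.2 (Finset.mem_image_of_mem _ hp)
    have hPQ : P.2 < Q.2 := by
      rcases lt_or_ge P.2 Q.2 with h' | h'
      · exact h'
      · exfalso
        have e0 := hmax' p0 hp0E
        have e1 := hmin p0 hp0E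
        have f0 := hmax' p1 hp1E
        have f1 := hmin p1 hp1E
        exact hp1ne (hinj p1 hp1E p0 hp0E (by omega))
    have hPm : eps θ P = m := (Finset.mem_filter.mp hPE).2
    have hQm : eps θ Q = m := (Finset.mem_filter.mp hQE).2
    have hA : eps θ (Seg.mk P Q).Q = eps θ (Seg.mk P Q).P := hQm.trans hPm.symm
    have hlfS := hlf_lemma (Seg.mk P Q) θ hA
    have hD : (0 : ℚ) < (Q.2 : ℚ) - P.2 := by
      have : (P.2 : ℚ) < Q.2 := Nat.cast_lt.mpr hPQ
      linarith
    have hRS : RightSeg h (Seg.mk P Q) := by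
      refine ⟨(Finset.mem_filter.mp hPE).1, (Finset.mem_filter.mp hQE).1, hPQ, ?_, ?_⟩
      · intro v hv
        have hq : ((lfun (Seg.mk P Q) v : ℤ) : ℚ) ≤ ((lfun (Seg.mk P Q) (Seg.mk P Q).P : ℤ) : ℚ) := by
          rw [hlfS v, hlfS (Seg.mk P Q).P]
          refine mul_le_mul_of_nonneg_left ?_ (le_of_lt hD)
          show eps θ v ≤ eps θ P
          rw [hPm]
          exact hub' v hv
        exact_mod_cast hq
      · intro v hv hveq
        have hq : ((lfun (Seg.mk P Q) v : ℤ) : ℚ) = ((lfun (Seg.mk P Q) (Seg.mk P Q).P : ℤ) : ℚ) := by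
          exact_mod_cast hveq
        rw [hlfS v, hlfS (Seg.mk P Q).P] at hq
        have hvP : eps θ v = eps θ P := mul_left_cancel₀ (ne_of_gt hD) hq
        have hvE : v ∈ (supp h).filter (fun p => eps θ p = m) :=
          Finset.mem_filter.mpr ⟨hv, hvP.trans hPm⟩
        exact ⟨hmin v hvE, hmax' v hvE⟩
    refine ⟨Seg.mk P Q, hRS, ?_⟩
    rw [inSub_eq h a θ m ho (Seg.mk P Q) (filter_eq h θ m (Seg.mk P Q) hRS hA hPm), hF0]
    exact HahnSeries.single_eq_zero
  · -- backward: exceptional segment → coefficient vanishes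
    rintro ⟨S, hRS, hz⟩
    obtain ⟨hPs, hQs, hPQ, hleS, hmx⟩ := hRS
    have hD : (0 : ℚ) < (S.Q.2 : ℚ) - S.P.2 := by
      have : (S.P.2 : ℚ) < S.Q.2 := Nat.cast_lt.mpr hPQ
      linarith
    by_cases hA : eps θ S.Q = eps θ S.P
    · obtain ⟨p0, hp0s, hp0m⟩ := hmax
      have hPm : eps θ S.P = m := by
        have h1 : eps θ S.P ≤ m := hub' S.P hPs
        have h2 : m ≤ eps θ S.P := by
          have hc' : ((lfun S p0 : ℤ) : ℚ) ≤ ((lfun S S.P : ℤ) : ℚ) := by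
            exact_mod_cast hleS p0 hp0s
          rw [hlf_lemma S θ hA, hlf_lemma S θ hA] at hc'
          have := le_of_mul_le_mul_left (by linarith : ((S.Q.2 : ℚ) - S.P.2) * eps θ p0
            ≤ ((S.Q.2 : ℚ) - S.P.2) * eps θ S.P) hD
          calc m = eps θ p0 := hp0m.symm
            _ ≤ eps θ S.P := this
        linarith
      rw [inSub_eq h a θ m ho S
        (filter_eq h θ m S ⟨hPs, hQs, hPQ, hleS, hmx⟩ hA hPm)] at hz
      exact HahnSeries.single_eq_zero_iff.mp hz
    · exfalso
      have hδ : (S.Q.1 : ℚ) - S.P.1 + θ * ((S.Q.2 : ℚ) - S.P.2) ≠ 0 := by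
        intro h'
        apply hA
        unfold eps
        linarith
      have hexpand : inSub h S (lead a) = ∑ p ∈ (supp h).filter (OnSeg S),
          HahnSeries.single (OrderDual.toDual (eps θ p))
            (coeff2 h p * a.leadingCoeff ^ p.2) := by
        unfold inSub lead
        rw [ho]
        refine Finset.sum_congr rfl fun p hp => ?_
        rw [HahnSeries.single_pow, HahnSeries.single_mul_single]
        have hexp : OrderDual.toDual (p.1 : ℚ) + p.2 • OrderDual.toDual θ
            = OrderDual.toDual (eps θ p) := by
          show OrderDual.toDual ((p.1 : ℚ) + p.2 • θ) = _
          congr 1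
          rw [nsmul_eq_mul, eps]; ring
        rw [hexp]
      have hPin : S.P ∈ (supp h).filter (OnSeg S) :=
        Finset.mem_filter.mpr ⟨hPs,
          ⟨rfl, min_le_left _ _, le_max_left _ _, min_le_left _ _, le_max_left _ _⟩⟩
      have hco := congrArg (fun x : K => x.coeff (OrderDual.toDual (eps θ S.P)))
        (hexpand.symm.trans hz)
      simp only [HahnSeries.coeff_zero] at hco
      rw [sum_coeff] at hco
      rw [Finset.sum_eq_single S.P ?_ ?_] at hco
      · rw [HahnSeries.coeff_single_same] at hco
        exact (mul_ne_zero ((mem_supp_iff h S.P).mp hPs) (pow_ne_zero _ hc)) hco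
      · intro p hp hne
        apply HahnSeries.coeff_single_of_ne
        intro hcon
        apply hne
        have heps : eps θ S.P = eps θ p := OrderDual.toDual.injective hcon
        obtain ⟨hps, honseg⟩ := Finset.mem_filter.mp hp
        have e1 : ((lfun S p : ℤ) : ℚ) = ((lfun S S.P : ℤ) : ℚ) := by
          exact_mod_cast honseg.1
        unfold lfun at e1
        push_cast at e1
        have e2 : (p.1 : ℚ) + θ * p.2 = (S.P.1 : ℚ) + θ * S.P.2 := by
          have := heps.symm
          unfold eps at this
          exact this
        have key : ((p.2 : ℚ) - S.P.2)
            * ((S.Q.1 : ℚ) - S.P.1 + θ * ((S.Q.2 : ℚ) - S.P.2)) = 0 := by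
          linear_combination (-1 : ℚ) * e1 + ((S.Q.2 : ℚ) - S.P.2) * e2
        have h2 : (p.2 : ℚ) = S.P.2 := by
          rcases mul_eq_zero.mp key with h' | h'
          · linarith
          · exact absurd h' hδ
        have h2' : p.2 = S.P.2 := Nat.cast_injective h2
        have h1 : (p.1 : ℚ) = S.P.1 := by
          rw [h2] at e2
          linarith
        exact Prod.ext (Nat.cast_injective h1) h2'
      · intro hcon
        exact absurd hPin hcon
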